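/- Let P ∈ ℤ[y₁,…,y_r] be a nonzero polynomial of degree less than D in each variable, with all coefficients of absolute value less than C. If integers β₁,…,β_r satisfy β₁ ≥ C and β_{j+1} ≥ C·D^j·β_j^D for 1 ≤ j ≤ r−1, then P(β₁,…,β_r) ≠ 0. -/

import Mathlib

open MvPolynomial

set_option maxHeartbeats 1000000

private lemma koiran_card_support_le {n D : ℕ} (hD : 0 < D) (Q : MvPolynomial (Fin n) ℤ)
    (hdeg : ∀ m ∈ Q.support, ∀ i : Fin n, m i < D) :
    Q.support.card ≤ D ^ n := by
  have h : Q.support.card ≤ Fintype.card (Fin n → Fin D) := by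
    apply Finset.card_le_card_of_injOn (fun m i => (⟨m i % D, Nat.mod_lt _ hD⟩ : Fin D))
      (fun _ _ => Finset.mem_univ _)
    intro m hm m' hm' h
    ext i
    have h1 := congrFun h i
    simp only [Fin.mk.injEq] at h1
    rwa [Nat.mod_eq_of_lt (hdeg m hm i), Nat.mod_eq_of_lt (hdeg m' hm' i)] at h1
  simpa using h

private lemma koiran_eval_abs_le {n D : ℕ} (C : ℤ) (hD : 0 < D) (Q : MvPolynomial (Fin n) ℤ)
    (hdeg : ∀ m ∈ Q.support, ∀ i : Fin n, m i < D)
    (hcoeff : ∀ m, |Q.coeff m| ≤ C - 1)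
    (γ : Fin n → ℤ) (hγ : ∀ i, 1 ≤ γ i) :
    |eval γ Q| ≤ (C - 1) * (D : ℤ) ^ n * ∏ j, γ j ^ (D - 1) := by
  have hγ0 : ∀ i, (0:ℤ) ≤ γ i := fun i => le_trans zero_le_one (hγ i)
  have hprodnn : (0:ℤ) ≤ ∏ j, γ j ^ (D - 1) :=
    Finset.prod_nonneg fun j _ => pow_nonneg (hγ0 j) _
  have hC1 : (0:ℤ) ≤ C - 1 := le_trans (abs_nonneg _) (hcoeff 0)
  calc |eval γ Q| ≤ ∑ m ∈ Q.support, |Q.coeff m * ∏ j, γ j ^ m j| := by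
        rw [eval_eq']
        exact Finset.abs_sum_le_sum_abs _ _
    _ ≤ ∑ _m ∈ Q.support, (C - 1) * ∏ j, γ j ^ (D - 1) := by
        apply Finset.sum_le_sum
        intro m hm
        rw [abs_mul]
        have h1 : |∏ j, γ j ^ m j| = ∏ j, γ j ^ m j :=
          abs_of_nonneg (Finset.prod_nonneg fun j _ => pow_nonneg (hγ0 j) _)
        rw [h1]
        apply mul_le_mul (hcoeff m) _ (Finset.prod_nonneg fun j _ => pow_nonneg (hγ0 j) _) hC1
        apply Finset.prod_le_prod (fun j _ => pow_nonneg (hγ0 j) _)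
        intro j _
        exact pow_le_pow_right₀ (hγ j) (by have := hdeg m hm j; omega)
    _ = (Q.support.card : ℤ) * ((C - 1) * ∏ j, γ j ^ (D - 1)) := by
        rw [Finset.sum_const, nsmul_eq_mul]
    _ ≤ ((D : ℤ) ^ n) * ((C - 1) * ∏ j, γ j ^ (D - 1)) := by
        apply mul_le_mul_of_nonneg_right _ (mul_nonneg hC1 hprodnn)
        have := koiran_card_support_le hD Q hdeg
        exact_mod_cast Int.ofNat_le.mpr (by simpa using this)
    _ = (C - 1) * (D : ℤ) ^ n * ∏ j, γ j ^ (D - 1) := by ring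

/-- product chain bound: for a reversed-decreasing sequence of length `n+1`,
`C * D^n * ∏ γ_j^(D-1) ≤ γ_0 ^ D`. -/
private lemma koiran_prod_le {D : ℕ} {C : ℤ} (hC : 2 ≤ C) (hD : 1 ≤ D) :
    ∀ (n : ℕ) (γ : Fin (n + 1) → ℤ), (∀ i, C ≤ γ i) →
      (∀ (i : ℕ) (h : i + 1 < n + 1),
        C * (D : ℤ) ^ (n - i) * γ ⟨i + 1, h⟩ ^ D ≤ γ ⟨i, by omega⟩) →
      C * (D : ℤ) ^ n * ∏ j, γ j ^ (D - 1) ≤ γ 0 ^ D := by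
  intro n
  induction n with
  | zero =>
    intro γ hγ _
    have h0 : (1:ℤ) ≤ γ 0 := by linarith [hγ 0]
    have hpe : (∏ j : Fin 1, γ j ^ (D - 1)) = γ 0 ^ (D - 1) := by simp
    rw [hpe, pow_zero, mul_one]
    have hpow : γ 0 ^ D = γ 0 ^ (D - 1) * γ 0 := by
      rw [← pow_succ]; congr 1; omega
    rw [hpow]
    calc C * γ 0 ^ (D - 1) = γ 0 ^ (D - 1) * C := by ring
      _ ≤ γ 0 ^ (D - 1) * γ 0 :=
          mul_le_mul_of_nonneg_left (hγ 0) (pow_nonneg (by linarith) _)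
  | succ n ih =>
    intro γ hγ hchain
    have hγ0 : ∀ i, (0:ℤ) ≤ γ i := fun i => le_trans (by linarith) (hγ i)
    have hγ1 : ∀ i, (1:ℤ) ≤ γ i := fun i => le_trans (by linarith) (hγ i)
    set γ' : Fin (n + 1) → ℤ := fun i => γ i.succ with hγ'def
    have htail : C * (D : ℤ) ^ n * ∏ j, γ' j ^ (D - 1) ≤ γ' 0 ^ D := by
      apply ih γ' (fun i => hγ _)
      intro i h
      have h2 : i + 1 + 1 < n + 2 := by omega
      have := hchain (i + 1) h2
      have e1 : γ ⟨i + 1 + 1, h2⟩ = γ' ⟨i + 1, h⟩ := rfl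
      have e2 : γ ⟨i + 1, by omega⟩ = γ' ⟨i, by omega⟩ := rfl
      rw [e1, e2] at this
      have : C * (D:ℤ) ^ (n + 1 - (i + 1)) * γ' ⟨i + 1, h⟩ ^ D ≤ γ' ⟨i, by omega⟩ := this
      have he : n + 1 - (i + 1) = n - i := by omega
      rwa [he] at this
    have hprod : (∏ j : Fin (n + 2), γ j ^ (D - 1))
        = γ 0 ^ (D - 1) * ∏ j : Fin (n + 1), γ' j ^ (D - 1) := by
      rw [Fin.prod_univ_succ]
    have hprodnn : (0:ℤ) ≤ ∏ j : Fin (n + 1), γ' j ^ (D - 1) :=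
      Finset.prod_nonneg fun j _ => pow_nonneg (hγ0 _) _
    have h0 := hchain 0 (by omega)
    -- h0 : C * D ^ (n + 1 - 0) * γ ⟨1, _⟩ ^ D ≤ γ ⟨0, _⟩
    have hγ'0 : γ' 0 = γ ⟨1, by omega⟩ := rfl
    have hD1 : (1:ℤ) ≤ (D:ℤ) := by exact_mod_cast hD
    have hDpow : (D:ℤ) ≤ C * (D:ℤ) ^ (n + 1) := by
      calc (D:ℤ) = 1 * (D:ℤ) ^ 1 := by ring
        _ ≤ C * (D:ℤ) ^ (n + 1) := by
            apply mul_le_mul (by linarith) (pow_le_pow_right₀ hD1 (by omega)) (by positivity)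
              (by linarith)
    have hstep : (D:ℤ) * γ' 0 ^ D ≤ γ 0 := by
      have hp : (0:ℤ) ≤ γ' 0 ^ D := pow_nonneg (hγ0 _) _
      have : (D:ℤ) * γ' 0 ^ D ≤ (C * (D:ℤ) ^ (n + 1)) * γ' 0 ^ D :=
        mul_le_mul_of_nonneg_right hDpow hp
      have h0' : C * (D:ℤ) ^ (n + 1) * γ' 0 ^ D ≤ γ 0 := by
        rw [hγ'0]
        have e : γ (0 : Fin (n+2)) = γ ⟨0, by omega⟩ := rfl
        rw [e]
        simpa using h0
      linarith
    calc C * (D : ℤ) ^ (n + 1) * ∏ j : Fin (n + 2), γ j ^ (D - 1)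
        = γ 0 ^ (D - 1) * ((D:ℤ) * (C * (D:ℤ) ^ n * ∏ j, γ' j ^ (D - 1))) := by
          rw [hprod]; ring
      _ ≤ γ 0 ^ (D - 1) * ((D:ℤ) * (γ' 0 ^ D)) := by
          apply mul_le_mul_of_nonneg_left _ (pow_nonneg (hγ0 _) _)
          exact mul_le_mul_of_nonneg_left htail (by positivity)
      _ ≤ γ 0 ^ (D - 1) * γ 0 := by
          exact mul_le_mul_of_nonneg_left hstep (pow_nonneg (hγ0 _) _)
      _ = γ 0 ^ D := by rw [← pow_succ]; congr 1; omega

private lemma koiran_aux {C : ℤ} {D : ℕ} (hC : 2 ≤ C) (hD : 1 ≤ D) :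
    ∀ (n : ℕ) (P : MvPolynomial (Fin n) ℤ), P ≠ 0 →
      (∀ m ∈ P.support, ∀ i : Fin n, m i < D) →
      (∀ m, |P.coeff m| ≤ C - 1) →
      ∀ γ : Fin n → ℤ, (∀ i, C ≤ γ i) →
      (∀ (i : ℕ) (h : i + 1 < n),
        C * (D : ℤ) ^ (n - 1 - i) * γ ⟨i + 1, h⟩ ^ D ≤ γ ⟨i, by omega⟩) →
      1 ≤ |eval γ P| := by
  intro n
  induction n with
  | zero =>
    intro P hP _ _ γ _ _
    rw [eq_C_of_isEmpty P] at hP ⊢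
    rw [eval_C]
    have : P.coeff 0 ≠ 0 := fun h => hP (by rw [h, map_zero])
    exact Int.one_le_abs (by exact_mod_cast this)
  | succ n ih =>
    intro P hP hdeg hcoeff γ hγ hchain
    have hγ0 : ∀ i, (0:ℤ) ≤ γ i := fun i => le_trans (by linarith) (hγ i)
    have hγ1 : ∀ i, (1:ℤ) ≤ γ i := fun i => le_trans (by linarith) (hγ i)
    have hγ2 : ∀ i, (2:ℤ) ≤ γ i := fun i => le_trans hC (hγ i)
    set q := finSuccEquiv ℤ n P with hq
    have hqne : q ≠ 0 := by
      intro h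
      apply hP
      have := (finSuccEquiv ℤ n).injective (a₁ := P) (a₂ := 0)
      exact this (by rw [← hq, h, map_zero])
    set d := q.natDegree with hdd
    set γ' : Fin n → ℤ := Fin.tail γ with hγ'def
    -- coefficients of the coefficient polynomials
    have hco : ∀ (k : ℕ) (m : Fin n →₀ ℕ),
        coeff m (q.coeff k) = P.coeff (m.cons k) := by
      intro k m
      exact finSuccEquiv_coeff_coeff m P k
    have hdeg' : ∀ k : ℕ, ∀ m ∈ (q.coeff k).support, ∀ i : Fin n, m i < D := by
      intro k m hm i
      rw [mem_support_iff, hco] at hm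
      have := hdeg _ (mem_support_iff.mpr hm) i.succ
      rwa [Finsupp.cons_succ] at this
    have hcoeff' : ∀ k : ℕ, ∀ m, |coeff m (q.coeff k)| ≤ C - 1 := by
      intro k m; rw [hco]; exact hcoeff _
    -- bound on evaluations of the coefficient polynomials
    have hbound : ∀ k : ℕ,
        |eval γ' (q.coeff k)| ≤ (C - 1) * (D : ℤ) ^ n * ∏ j, γ' j ^ (D - 1) :=
      fun k => koiran_eval_abs_le C (by omega) _ (hdeg' k) (hcoeff' k) γ'
        (fun i => hγ1 _)
    -- the key inequality : (C-1) * D^n * ∏ γ'_j^(D-1) ≤ γ 0 - 1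
    have hkey : (C - 1) * (D : ℤ) ^ n * ∏ j, γ' j ^ (D - 1) ≤ γ 0 - 1 := by
      cases n with
      | zero =>
        simp only [pow_zero, Finset.univ_eq_empty, Finset.prod_empty, mul_one]
        have := hγ 0
        linarith
      | succ m =>
        have hchain' : ∀ (i : ℕ) (h : i + 1 < m + 1),
            C * (D : ℤ) ^ (m - i) * γ' ⟨i + 1, h⟩ ^ D ≤ γ' ⟨i, by omega⟩ := by
          intro i h
          have h2 : (i + 1) + 1 < m + 2 := by omega
          have := hchain (i + 1) h2
          have he : m + 2 - 1 - (i + 1) = m - i := by omega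
          rw [he] at this
          have e1 : γ ⟨i + 1 + 1, h2⟩ = γ' ⟨i + 1, h⟩ := rfl
          have e2 : γ ⟨i + 1, by omega⟩ = γ' ⟨i, by omega⟩ := rfl
          rwa [e1, e2] at this
        have hP := koiran_prod_le hC hD m γ' (fun i => hγ _) hchain'
        -- hP : C * D^m * ∏ γ'_j^(D-1) ≤ γ' 0 ^ D
        have hγ'0 : γ' 0 = γ ⟨1, by omega⟩ := rfl
        have h0 := hchain 0 (by omega)
        have he0 : m + 2 - 1 - 0 = m + 1 := by omega
        rw [he0] at h0
        have h00 : γ ⟨0, by omega⟩ = γ 0 := rfl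
        rw [h00] at h0
        -- h0 : C * D^(m+1) * γ 1 ^ D ≤ γ 0
        set X := (C - 1) * (D : ℤ) ^ (m + 1) * ∏ j, γ' j ^ (D - 1) with hX
        have hprodpos : (1:ℤ) ≤ ∏ j : Fin (m+1), γ' j ^ (D - 1) := by
          have h1 : (1:ℤ) = ∏ _j : Fin (m+1), (1:ℤ) := by simp
          rw [h1]
          exact Finset.prod_le_prod (by intros; norm_num)
            (fun j _ => by exact one_le_pow₀ (hγ1 (Fin.succ j)))
        have hX1 : (1:ℤ) ≤ X := by
          rw [hX]
          have hCD : (1:ℤ) ≤ (C - 1) * (D:ℤ)^(m+1) := by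
            calc (1:ℤ) = 1 * 1 := by ring
              _ ≤ (C - 1) * (D:ℤ)^(m+1) :=
                  mul_le_mul (by linarith) (one_le_pow₀ (by exact_mod_cast hD))
                    (by norm_num) (by linarith)
          calc (1:ℤ) = 1 * 1 := by ring
            _ ≤ (C - 1) * (D:ℤ)^(m+1) * ∏ j, γ' j ^ (D - 1) :=
                mul_le_mul hCD hprodpos (by norm_num) (by linarith)
        have hCX : C * X ≤ γ 0 := by
          have hDle : (C - 1) * (D:ℤ) ≤ C * (D:ℤ)^(m+1) := by
            have h1 : (0:ℤ) ≤ (D:ℤ) := by positivity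
            have h2 : (D:ℤ) ≤ (D:ℤ)^(m+1) :=
              le_self_pow₀ (by exact_mod_cast hD) (by omega)
            have := mul_le_mul (show C - 1 ≤ C by linarith) h2 h1 (by linarith)
            linarith
          have hpd : (0:ℤ) ≤ γ' 0 ^ D := pow_nonneg (hγ0 _) _
          calc C * X = (C - 1) * (D:ℤ) * (C * (D:ℤ)^m * ∏ j, γ' j ^ (D - 1)) := by
                rw [hX]; ring
            _ ≤ (C - 1) * (D:ℤ) * (γ' 0 ^ D) := by
                apply mul_le_mul_of_nonneg_left hP
                have : (0:ℤ) ≤ (D:ℤ) := by positivity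
                nlinarith
            _ ≤ C * (D:ℤ)^(m+1) * γ' 0 ^ D := mul_le_mul_of_nonneg_right hDle hpd
            _ ≤ γ 0 := by rw [hγ'0]; exact h0
        nlinarith
    -- now the evaluation identity
    have heval : eval γ P = Polynomial.eval (γ 0) (Polynomial.map (eval γ') q) := by
      have := eval_eq_eval_mv_eval' γ' (γ 0) P
      rw [show (Fin.cons (γ 0) γ' : Fin (n+1) → ℤ) = γ from Fin.cons_self_tail γ] at this
      exact this
    have hndlt : (Polynomial.map (eval γ') q).natDegree < d + 1 :=
      lt_of_le_of_lt Polynomial.natDegree_map_le (by omega)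
    have hsum : eval γ P = ∑ i ∈ Finset.range (d + 1),
        eval γ' (q.coeff i) * γ 0 ^ i := by
      rw [heval, Polynomial.eval_eq_sum_range' hndlt]
      apply Finset.sum_congr rfl
      intro i _
      rw [Polynomial.coeff_map]
    rw [hsum, Finset.sum_range_succ]
    -- top term
    have hQd : q.coeff d ≠ 0 := Polynomial.leadingCoeff_ne_zero.mpr hqne
    have hchain'' : ∀ (i : ℕ) (h : i + 1 < n),
        C * (D : ℤ) ^ (n - 1 - i) * γ' ⟨i + 1, h⟩ ^ D ≤ γ' ⟨i, by omega⟩ := by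
      intro i h
      have h2 : (i + 1) + 1 < n + 1 := by omega
      have hx := hchain (i + 1) h2
      have he : n + 1 - 1 - (i + 1) = n - 1 - i := by omega
      rw [he] at hx
      have e1 : γ ⟨i + 1 + 1, h2⟩ = γ' ⟨i + 1, h⟩ := rfl
      have e2 : γ ⟨i + 1, by omega⟩ = γ' ⟨i, by omega⟩ := rfl
      rwa [e1, e2] at hx
    have htop := ih (q.coeff d) hQd (hdeg' d) (hcoeff' d) γ' (fun i => hγ _) hchain''
    have hγ00 : (0:ℤ) ≤ γ 0 := hγ0 0
    have htopge : γ 0 ^ d ≤ |eval γ' (q.coeff d) * γ 0 ^ d| := by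
      rw [abs_mul, abs_pow, abs_of_nonneg hγ00]
      have hp : (0:ℤ) ≤ γ 0 ^ d := pow_nonneg hγ00 d
      nlinarith
    have hlow : |∑ i ∈ Finset.range d, eval γ' (q.coeff i) * γ 0 ^ i| ≤ γ 0 ^ d - 1 := by
      calc |∑ i ∈ Finset.range d, eval γ' (q.coeff i) * γ 0 ^ i|
          ≤ ∑ i ∈ Finset.range d, |eval γ' (q.coeff i) * γ 0 ^ i| :=
            Finset.abs_sum_le_sum_abs _ _
        _ ≤ ∑ i ∈ Finset.range d, (γ 0 - 1) * γ 0 ^ i := by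
            apply Finset.sum_le_sum; intro i _
            rw [abs_mul, abs_pow, abs_of_nonneg hγ00]
            exact mul_le_mul_of_nonneg_right (le_trans (hbound i) hkey)
              (pow_nonneg hγ00 i)
        _ = (∑ i ∈ Finset.range d, γ 0 ^ i) * (γ 0 - 1) := by
            rw [Finset.sum_mul]
            apply Finset.sum_congr rfl; intros; ring
        _ = γ 0 ^ d - 1 := geom_sum_mul _ _
    set S := ∑ i ∈ Finset.range d, eval γ' (q.coeff i) * γ 0 ^ i with hS
    set T := eval γ' (q.coeff d) * γ 0 ^ d with hT
    have h1 : |T| ≤ |S + T| + |S| := by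
      calc |T| = |(S + T) + (-S)| := by rw [show (S + T) + (-S) = T by ring]
        _ ≤ |S + T| + |(-S)| := abs_add_le _ _
        _ = |S + T| + |S| := by rw [abs_neg]
    linarith

/-- No big integer roots: a nonzero integer polynomial of degree `< D` in each
variable, with coefficients of absolute value `< C`, does not vanish at a
rapidly growing integer sequence. -/
theorem stmt4 (r : ℕ) (P : MvPolynomial (Fin r) ℤ) (hP : P ≠ 0)
    (C : ℤ) (D : ℕ) (hC : 0 < C) (hD : 1 ≤ D)
    (hdeg : ∀ m : Fin r →₀ ℕ, P.coeff m ≠ 0 → ∀ i, m i < D)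
    (hcoeff : ∀ m, |P.coeff m| < C)
    (β : Fin r → ℤ)
    (hβ1 : ∀ h : 0 < r, C ≤ β ⟨0, h⟩)
    (hβ : ∀ j : ℕ, (hj : j + 1 < r) →
      C * (D : ℤ) ^ (j + 1) * (β ⟨j, by omega⟩) ^ D ≤ β ⟨j + 1, hj⟩) :
    MvPolynomial.eval β P ≠ 0 := by
  by_cases hC2 : 2 ≤ C
  swap
  · exfalso; apply hP
    have hc1 : C = 1 := by omega
    ext m
    have h := hcoeff m
    rw [hc1] at h
    simpa using Int.abs_lt_one_iff.mp h
  have hcoeff1 : ∀ m, |P.coeff m| ≤ C - 1 := fun m => by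
    have := Int.lt_iff_add_one_le.mp (hcoeff m); linarith
  have hall : ∀ (j : ℕ) (h : j < r), C ≤ β ⟨j, h⟩ := by
    intro j
    induction j with
    | zero => intro h; exact hβ1 h
    | succ j ihj =>
      intro h
      have hjr : j < r := by omega
      have h1 : C * (D:ℤ) ^ (j+1) * β ⟨j, hjr⟩ ^ D ≤ β ⟨j+1, h⟩ := hβ j h
      have hb := ihj hjr
      have hD1 : (1:ℤ) ≤ (D:ℤ)^(j+1) := one_le_pow₀ (by exact_mod_cast hD)
      have hbD : (1:ℤ) ≤ β ⟨j, hjr⟩ ^ D := one_le_pow₀ (by linarith)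
      have h2 : C ≤ C * (D:ℤ) ^ (j+1) := le_mul_of_one_le_right (by linarith) hD1
      have h3 : C * (D:ℤ) ^ (j+1) ≤ C * (D:ℤ) ^ (j+1) * β ⟨j, hjr⟩ ^ D :=
        le_mul_of_one_le_right (by nlinarith) hbD
      linarith
  set Pr := rename (Fin.rev : Fin r → Fin r) P with hPr
  set γ : Fin r → ℤ := fun i => β i.rev with hγdef
  have hev : eval β P = eval γ Pr := by
    rw [hPr, eval_rename]
    have hfe : (γ ∘ Fin.rev) = β := funext fun i => by simp [hγdef, Fin.rev_rev]
    rw [hfe]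
  have hPrne : Pr ≠ 0 := fun h =>
    hP (rename_injective _ Fin.rev_injective (by rw [← hPr, h, map_zero]))
  have hcoPr : ∀ m' : Fin r →₀ ℕ,
      Pr.coeff m' = P.coeff (Finsupp.mapDomain Fin.rev m') := by
    intro m'
    have hid : Finsupp.mapDomain Fin.rev (Finsupp.mapDomain Fin.rev m') = m' := by
      rw [← Finsupp.mapDomain_comp]
      have : (Fin.rev ∘ Fin.rev : Fin r → Fin r) = id := funext fun i => Fin.rev_rev i
      rw [this, Finsupp.mapDomain_id]
    conv_lhs => rw [← hid]
    rw [hPr, coeff_rename_mapDomain _ Fin.rev_injective]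
  have hdegPr : ∀ m' ∈ Pr.support, ∀ i : Fin r, m' i < D := by
    intro m' hm' i
    rw [mem_support_iff, hcoPr] at hm'
    have h1 := hdeg _ hm' i.rev
    rwa [Finsupp.mapDomain_apply Fin.rev_injective] at h1
  have hcoPr' : ∀ m', |Pr.coeff m'| ≤ C - 1 := fun m' => by
    rw [hcoPr]; exact hcoeff1 _
  have hγC : ∀ i : Fin r, C ≤ γ i := fun i => hall i.rev.1 i.rev.2
  have hγchain : ∀ (i : ℕ) (h : i + 1 < r),
      C * (D:ℤ)^(r - 1 - i) * γ ⟨i+1, h⟩ ^ D ≤ γ ⟨i, by omega⟩ := by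
    intro i h
    have hj : (r - 2 - i) + 1 < r := by omega
    have h1 : C * (D:ℤ)^((r-2-i)+1) * β ⟨r-2-i, by omega⟩ ^ D
        ≤ β ⟨(r-2-i)+1, hj⟩ := hβ _ hj
    have e1 : γ ⟨i+1, h⟩ = β ⟨r-2-i, by omega⟩ := by
      show β (Fin.rev _) = _
      congr 1
      apply Fin.ext
      rw [Fin.val_rev]
      simp only [Fin.val_mk]
      omega
    have e2 : γ ⟨i, by omega⟩ = β ⟨(r-2-i)+1, hj⟩ := by
      show β (Fin.rev _) = _
      congr 1
      apply Fin.ext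
      rw [Fin.val_rev]
      simp only [Fin.val_mk]
      omega
    have e3 : r - 1 - i = (r-2-i)+1 := by omega
    rw [e1, e2, e3]
    exact h1
  rw [hev]
  intro h0
  have h1 := koiran_aux hC2 hD r Pr hPrne hdegPr hcoPr' γ hγC hγchain
  rw [h0] at h1
  norm_num at h1
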